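/- Let N ≥ 2, let A(s) be the real symmetric 2×2 matrix with entries A₁₁ = 1 − s − (1−s)/N, A₂₂ = 1 − (1−s)(N−1)/N, A₁₂ = A₂₁ = −(1−s)√(N−1)/N, let φ : [0,1] → ℝ² be a continuously differentiable family of unit ground-state eigenvectors of A(s) (eigenvalue (1 − Δ(s))/2 with Δ(s) = √(1 − 4(1 − 1/N)s(1−s))), and let s_o(τ) = 1/2 + (1/(2√(N−1))) tan((2τ − 1) arctan(√(N−1))). Then the reparametrized eigenpath τ ↦ φ(s_o(τ)) has constant speed: ‖(d/dτ) φ(s_o(τ))‖ = arctan(√(N−1)) for all τ ∈ [0,1]. That is, the optimal schedule for the adiabatic Grover problem is a constant speed schedule. -/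

import Mathlib

open Real Set

private lemma aux_delta (c S r n D E sv : ℝ) (hp : c^2+S^2=1) (hr2 : r^2 = n-1)
    (hD : D = c^2 - S^2 + 2*r*S*c) (hE : E = r*(c^2-S^2) - 2*S*c)
    (hn : n ≠ 0) (hr0 : r ≠ 0) (hD0 : D ≠ 0)
    (hs : sv = 1/2 + E/(2*r*D)) :
    1 - 4*(1 - 1/n)*sv*(1-sv) = (1/D)^2 := by
  have key : D^2 + E^2 = n := by
    rw [hD, hE]; linear_combination ((1+r^2)*(c^2+S^2+1))*hp + hr2
  rw [hs]
  field_simp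
  linear_combination 4*(n-1)*key + 4*(D^2-n)*hr2

private lemma aux_eig1 (c S r n D E sv dv : ℝ) (hp : c^2+S^2=1) (hr2 : r^2 = n-1)
    (hD : D = c^2 - S^2 + 2*r*S*c) (hE : E = r*(c^2-S^2) - 2*S*c)
    (hn : n ≠ 0) (hr0 : r ≠ 0) (hD0 : D ≠ 0)
    (hs : sv = 1/2 + E/(2*r*D)) (hdv : dv = 1/D) :
    (1 - sv - (1 - sv)/n) * c + (-(1-sv)*r/n) * S = (1 - dv)/2 * c := by
  rw [hs, hdv]
  field_simp
  linear_combination (-r*n*c)*hp + (-2*S*c*(c+r*S))*hr2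
    + (-r*(c+r*S))*hD + (-((n-1)*c-r*S))*hE

private lemma aux_eig2 (c S r n D E sv dv : ℝ) (hp : c^2+S^2=1) (hr2 : r^2 = n-1)
    (hD : D = c^2 - S^2 + 2*r*S*c) (hE : E = r*(c^2-S^2) - 2*S*c)
    (hn : n ≠ 0) (hr0 : r ≠ 0) (hD0 : D ≠ 0)
    (hs : sv = 1/2 + E/(2*r*D)) (hdv : dv = 1/D) :
    (-(1-sv)*r/n) * c + (1 - (1-sv)*(n-1)/n) * S = (1 - dv)/2 * S := by
  rw [hs, hdv]
  field_simp
  linear_combination (-r*n*S)*hp + (2*S*c*(S-r*c))*hr2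
    + (r*(S-r*c))*hD + (r*c+(n-1)*S)*hE

private lemma aux_parallel (n r sv dv p0 p1 c S : ℝ) (hn : n ≠ 0) (hdv : dv ≠ 0)
    (e1 : (1 - sv - (1 - sv)/n) * p0 + (-(1-sv)*r/n) * p1 = (1 - dv)/2 * p0)
    (e2 : (-(1-sv)*r/n) * p0 + (1 - (1-sv)*(n-1)/n) * p1 = (1 - dv)/2 * p1)
    (f1 : (1 - sv - (1 - sv)/n) * c + (-(1-sv)*r/n) * S = (1 - dv)/2 * c)
    (f2 : (-(1-sv)*r/n) * c + (1 - (1-sv)*(n-1)/n) * S = (1 - dv)/2 * S) :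
    p0*S - p1*c = 0 := by
  have h : (2*n) * (dv * (p0*S - p1*c)) = 0 := by
    field_simp at e1 e2 f1 f2
    linear_combination S*e1 - p1*f1 + p0*f2 - c*e2
  have h2 : dv * (p0*S - p1*c) = 0 := by
    rcases mul_eq_zero.mp h with h' | h'
    · exact absurd h' (by simpa using hn)
    · exact h'
  rcases mul_eq_zero.mp h2 with h' | h'
  · exact absurd h' hdv
  · exact h'

private lemma aux_comp (p0 p1 c S : ℝ) (hp : c^2+S^2 = 1) (hpar : p0*S - p1*c = 0) :
    p0 = (p0*c + p1*S)*c ∧ p1 = (p0*c+p1*S)*S :=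
  ⟨by linear_combination (-p0)*hp + S*hpar, by linear_combination (-p1)*hp + (-c)*hpar⟩

private lemma aux_Gsq (p0 p1 c S : ℝ) (hp : c^2+S^2 = 1) (hnorm : p0^2+p1^2 = 1)
    (hpar : p0*S - p1*c = 0) : (p0*c+p1*S)^2 = 1 := by
  linear_combination (c^2+S^2)*hnorm + hp - (p0*S-p1*c)*hpar

set_option maxHeartbeats 2000000 in
/-- For `N ≥ 2`, let `A(s)` be the `2×2` matrix of the Grover
interpolation Hamiltonian on its invariant subspace, `φ` a continuously differentiable
family of unit ground-state eigenvectors of `A(s)` (eigenvalue `(1 − Δ(s))/2` with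
`Δ(s) = √(1 − 4(1 − 1/N)s(1−s))`), and `s_o` the Roland–Cerf optimal schedule.
Then the reparametrized eigenpath `τ ↦ φ(s_o(τ))` has constant speed:
`‖(d/dτ) φ(s_o(τ))‖ = arctan √(N−1)` for all `τ ∈ [0,1]`. That is, the optimal
schedule for the adiabatic Grover problem is a constant speed schedule. -/
theorem grover_optimal_schedule_is_constant_speed
    (N : ℕ) (hN : 2 ≤ N)
    (Δ : ℝ → ℝ)
    (hΔ : ∀ s, Δ s = Real.sqrt (1 - 4 * (1 - 1 / (N : ℝ)) * s * (1 - s)))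
    (A : ℝ → Matrix (Fin 2) (Fin 2) ℝ)
    (hA : ∀ s, A s =
      !![1 - s - (1 - s) / (N : ℝ), -(1 - s) * Real.sqrt ((N : ℝ) - 1) / (N : ℝ);
         -(1 - s) * Real.sqrt ((N : ℝ) - 1) / (N : ℝ), 1 - (1 - s) * ((N : ℝ) - 1) / (N : ℝ)])
    (φ : ℝ → EuclideanSpace ℝ (Fin 2)) (hφ : ContDiff ℝ 1 φ)
    (hunit : ∀ s ∈ Set.Icc (0 : ℝ) 1, ‖φ s‖ = 1)
    (heig : ∀ s ∈ Set.Icc (0 : ℝ) 1,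
      (A s).mulVec (fun j => φ s j) = fun i => ((1 - Δ s) / 2) * φ s i)
    (so : ℝ → ℝ)
    (hso : ∀ τ, so τ = 1 / 2 + (1 / (2 * Real.sqrt ((N : ℝ) - 1)))
      * Real.tan ((2 * τ - 1) * Real.arctan (Real.sqrt ((N : ℝ) - 1)))) :
    ∀ τ ∈ Set.Icc (0 : ℝ) 1,
      ‖deriv (fun t => φ (so t)) τ‖ = Real.arctan (Real.sqrt ((N : ℝ) - 1)) := by
  have hn2 : (2:ℝ) ≤ (N:ℝ) := by exact_mod_cast hN
  set n : ℝ := (N:ℝ) with hndef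
  have hn0 : n ≠ 0 := by linarith
  set r : ℝ := Real.sqrt (n - 1) with hrdef
  have hr2 : r ^ 2 = n - 1 := Real.sq_sqrt (by linarith)
  have hr_pos : 0 < r := Real.sqrt_pos.mpr (by linarith)
  have hr0 : r ≠ 0 := ne_of_gt hr_pos
  set q : ℝ := Real.sqrt n with hqdef
  have hq2 : q ^ 2 = n := Real.sq_sqrt (by linarith)
  have hq_pos : 0 < q := Real.sqrt_pos.mpr (by linarith)
  have hq0 : q ≠ 0 := ne_of_gt hq_pos
  set α : ℝ := Real.arctan r with hαdef
  have hα_pos : 0 < α := by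
    rw [hαdef, ← Real.arctan_zero]; exact Real.arctan_strictMono hr_pos
  have hα_lt : α < π / 2 := Real.arctan_lt_pi_div_two r
  have h1n : 1 + r ^ 2 = n := by linarith [hr2]
  have hcosα : Real.cos α = 1 / q := by
    rw [hαdef, Real.cos_arctan, h1n, ← hqdef]
  have hsinα : Real.sin α = r / q := by
    rw [hαdef, Real.sin_arctan, h1n, ← hqdef]
  have htanα : Real.tan α = r := Real.tan_arctan r
  have hpyth : ∀ x : ℝ,
      Real.cos ((1-x)*α) ^ 2 + Real.sin ((1-x)*α) ^ 2 = 1 :=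
    fun x => Real.cos_sq_add_sin_sq _
  -- ranges
  have hθmem : ∀ x ∈ Icc (0:ℝ) 1, (1 - x) * α ∈ Icc 0 α := by
    intro x hx
    obtain ⟨h0, h1⟩ := hx
    exact ⟨by nlinarith, by nlinarith⟩
  have hc_pos : ∀ x ∈ Icc (0:ℝ) 1, 0 < Real.cos ((1-x)*α) := by
    intro x hx
    obtain ⟨h0, h1⟩ := hθmem x hx
    exact Real.cos_pos_of_mem_Ioo ⟨by nlinarith [Real.pi_pos], by linarith⟩
  have hS_nonneg : ∀ x ∈ Icc (0:ℝ) 1, 0 ≤ Real.sin ((1-x)*α) := by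
    intro x hx
    obtain ⟨h0, h1⟩ := hθmem x hx
    exact Real.sin_nonneg_of_nonneg_of_le_pi h0 (by nlinarith [Real.pi_pos])
  have humem : ∀ x ∈ Icc (0:ℝ) 1, (2 * x - 1) * α ∈ Ioo (-(π/2)) (π/2) := by
    intro x hx
    obtain ⟨h0, h1⟩ := hx
    exact ⟨by nlinarith, by nlinarith⟩
  have hucos_pos : ∀ x ∈ Icc (0:ℝ) 1, 0 < Real.cos ((2 * x - 1) * α) :=
    fun x hx => Real.cos_pos_of_mem_Ioo (humem x hx)
  -- cos u, sin u in terms of the half angle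
  have hcosu : ∀ x : ℝ, Real.cos ((2 * x - 1) * α)
      = (Real.cos ((1-x)*α)^2 - Real.sin ((1-x)*α)^2
          + 2*r*Real.sin ((1-x)*α)*Real.cos ((1-x)*α)) / q := by
    intro x
    have h2 : (2 * x - 1) * α = α - 2 * ((1 - x) * α) := by ring
    rw [h2, Real.cos_sub, Real.cos_two_mul, Real.sin_two_mul, hcosα, hsinα]
    linear_combination (1/q) * hpyth x
  have hsinu : ∀ x : ℝ, Real.sin ((2 * x - 1) * α)
      = (r*(Real.cos ((1-x)*α)^2 - Real.sin ((1-x)*α)^2)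
          - 2*Real.sin ((1-x)*α)*Real.cos ((1-x)*α)) / q := by
    intro x
    have h2 : (2 * x - 1) * α = α - 2 * ((1 - x) * α) := by ring
    rw [h2, Real.sin_sub, Real.cos_two_mul, Real.sin_two_mul, hcosα, hsinα]
    linear_combination (r/q) * hpyth x
  have hD_pos : ∀ x ∈ Icc (0:ℝ) 1,
      0 < Real.cos ((1-x)*α)^2 - Real.sin ((1-x)*α)^2
          + 2*r*Real.sin ((1-x)*α)*Real.cos ((1-x)*α) := by
    intro x hx
    have h1 := hucos_pos x hx
    rw [hcosu x] at h1
    have h2 := mul_pos h1 hq_pos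
    rwa [div_mul_cancel₀ _ hq0] at h2
  -- schedule value
  have hso_val : ∀ x ∈ Icc (0:ℝ) 1, so x = 1/2
      + (r*(Real.cos ((1-x)*α)^2 - Real.sin ((1-x)*α)^2)
          - 2*Real.sin ((1-x)*α)*Real.cos ((1-x)*α))
        / (2*r*(Real.cos ((1-x)*α)^2 - Real.sin ((1-x)*α)^2
          + 2*r*Real.sin ((1-x)*α)*Real.cos ((1-x)*α))) := by
    intro x hx
    have hD0 := ne_of_gt (hD_pos x hx)
    rw [hso x, Real.tan_eq_sin_div_cos, hsinu x, hcosu x]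
    field_simp
  -- schedule in [0,1]
  have hso_mem : ∀ x ∈ Icc (0:ℝ) 1, so x ∈ Icc (0:ℝ) 1 := by
    intro x hx
    have hmem := humem x hx
    have hαmem : α ∈ Ioo (-(π/2)) (π/2) := ⟨by nlinarith [Real.pi_pos], hα_lt⟩
    have hαmem' : -α ∈ Ioo (-(π/2)) (π/2) := ⟨by linarith, by nlinarith [Real.pi_pos]⟩
    obtain ⟨h0, h1⟩ := hx
    have hle1 : (2 * x - 1) * α ≤ α := by nlinarith
    have hle0 : -α ≤ (2 * x - 1) * α := by nlinarith
    have ht1 : Real.tan ((2 * x - 1) * α) ≤ r := by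
      have := Real.strictMonoOn_tan.monotoneOn hmem hαmem hle1
      rwa [htanα] at this
    have ht0 : -r ≤ Real.tan ((2 * x - 1) * α) := by
      have := Real.strictMonoOn_tan.monotoneOn hαmem' hmem hle0
      rwa [Real.tan_neg, htanα] at this
    rw [hso x]
    constructor
    · have h2 : (1/(2*r)) * (-r) ≤ (1 / (2*r)) * Real.tan ((2*x-1)*α) :=
        mul_le_mul_of_nonneg_left ht0 (by positivity)
      have h3 : (1/(2*r)) * (-r) = -(1/2) := by field_simp
      nlinarith
    · have h2 : (1 / (2*r)) * Real.tan ((2*x-1)*α) ≤ (1/(2*r)) * r :=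
        mul_le_mul_of_nonneg_left ht1 (by positivity)
      have h3 : (1/(2*r)) * r = 1/2 := by field_simp
      nlinarith
  -- gap value
  have hΔ_val : ∀ x ∈ Icc (0:ℝ) 1, Δ (so x)
      = 1 / (Real.cos ((1-x)*α)^2 - Real.sin ((1-x)*α)^2
          + 2*r*Real.sin ((1-x)*α)*Real.cos ((1-x)*α)) := by
    intro x hx
    have hD0 := ne_of_gt (hD_pos x hx)
    have h1 := aux_delta (Real.cos ((1-x)*α)) (Real.sin ((1-x)*α)) r n _ _ (so x)
      (hpyth x) hr2 rfl rfl hn0 hr0 hD0 (hso_val x hx)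
    rw [hΔ, h1, Real.sqrt_sq (le_of_lt (one_div_pos.mpr (hD_pos x hx)))]
  have hΔ_pos : ∀ x ∈ Icc (0:ℝ) 1, 0 < Δ (so x) := by
    intro x hx
    rw [hΔ_val x hx]
    exact one_div_pos.mpr (hD_pos x hx)
  -- eigen equations for the explicit eigenvector
  have hf1 : ∀ x ∈ Icc (0:ℝ) 1,
      (1 - so x - (1 - so x)/n) * Real.cos ((1-x)*α)
        + (-(1 - so x)*r/n) * Real.sin ((1-x)*α)
      = (1 - Δ (so x))/2 * Real.cos ((1-x)*α) := by
    intro x hx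
    exact aux_eig1 (Real.cos ((1-x)*α)) (Real.sin ((1-x)*α)) r n _ _ (so x) (Δ (so x))
      (hpyth x) hr2 rfl rfl hn0 hr0 (ne_of_gt (hD_pos x hx)) (hso_val x hx) (hΔ_val x hx)
  have hf2 : ∀ x ∈ Icc (0:ℝ) 1,
      (-(1 - so x)*r/n) * Real.cos ((1-x)*α)
        + (1 - (1 - so x)*(n-1)/n) * Real.sin ((1-x)*α)
      = (1 - Δ (so x))/2 * Real.sin ((1-x)*α) := by
    intro x hx
    exact aux_eig2 (Real.cos ((1-x)*α)) (Real.sin ((1-x)*α)) r n _ _ (so x) (Δ (so x))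
      (hpyth x) hr2 rfl rfl hn0 hr0 (ne_of_gt (hD_pos x hx)) (hso_val x hx) (hΔ_val x hx)
  -- eigen equations for φ
  have he1 : ∀ x ∈ Icc (0:ℝ) 1,
      (1 - so x - (1 - so x)/n) * φ (so x) 0
        + (-(1 - so x)*r/n) * φ (so x) 1
      = (1 - Δ (so x))/2 * φ (so x) 0 := by
    intro x hx
    have h := congrFun (heig (so x) (hso_mem x hx)) 0
    rw [hA] at h
    simp [Matrix.mulVec, dotProduct, Fin.sum_univ_two] at h
    linear_combination h
  have he2 : ∀ x ∈ Icc (0:ℝ) 1,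
      (-(1 - so x)*r/n) * φ (so x) 0
        + (1 - (1 - so x)*(n-1)/n) * φ (so x) 1
      = (1 - Δ (so x))/2 * φ (so x) 1 := by
    intro x hx
    have h := congrFun (heig (so x) (hso_mem x hx)) 1
    rw [hA] at h
    simp [Matrix.mulVec, dotProduct, Fin.sum_univ_two] at h
    linear_combination h
  -- φ is parallel to the explicit eigenvector
  have hpar : ∀ x ∈ Icc (0:ℝ) 1,
      φ (so x) 0 * Real.sin ((1-x)*α) - φ (so x) 1 * Real.cos ((1-x)*α) = 0 := by
    intro x hx
    exact aux_parallel n r (so x) (Δ (so x)) _ _ _ _ hn0 (ne_of_gt (hΔ_pos x hx))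
      (he1 x hx) (he2 x hx) (hf1 x hx) (hf2 x hx)
  have hnorm : ∀ x ∈ Icc (0:ℝ) 1, (φ (so x) 0)^2 + (φ (so x) 1)^2 = 1 := by
    intro x hx
    have h := hunit (so x) (hso_mem x hx)
    rw [EuclideanSpace.norm_eq] at h
    simp only [Fin.sum_univ_two, Real.norm_eq_abs, sq_abs] at h
    have hX : (0:ℝ) ≤ (φ (so x) 0)^2 + (φ (so x) 1)^2 := by positivity
    have h2 := Real.sq_sqrt hX
    rw [h] at h2
    linarith [h2]
  -- the sign function
  set G : ℝ → ℝ := fun x =>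
    φ (so x) 0 * Real.cos ((1-x)*α) + φ (so x) 1 * Real.sin ((1-x)*α) with hGdef
  have hGsq : ∀ x ∈ Icc (0:ℝ) 1, G x ^ 2 = 1 := by
    intro x hx
    exact aux_Gsq _ _ _ _ (hpyth x) (hnorm x hx) (hpar x hx)
  have hcomp : ∀ x ∈ Icc (0:ℝ) 1,
      φ (so x) 0 = G x * Real.cos ((1-x)*α) ∧ φ (so x) 1 = G x * Real.sin ((1-x)*α) := by
    intro x hx
    have h := aux_comp (φ (so x) 0) (φ (so x) 1) _ _ (hpyth x) (hpar x hx)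
    exact h
  -- differentiability of the schedule
  have hso_diffAt : ∀ x ∈ Icc (0:ℝ) 1, DifferentiableAt ℝ so x := by
    intro x hx
    have hcne : Real.cos ((2 * x - 1) * α) ≠ 0 := ne_of_gt (hucos_pos x hx)
    have h1 : HasDerivAt (fun t : ℝ => (2 * t - 1) * α) (2 * α) x := by
      have := (((hasDerivAt_id x).const_mul (2:ℝ)).sub_const 1).mul_const α
      simpa using this
    have h2 := (Real.hasDerivAt_tan hcne).comp x h1
    have h4 : so = fun τ => 1/2 + 1/(2*r) * Real.tan ((2*τ - 1)*α) := funext hso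
    rw [h4]
    exact ((h2.const_mul (1/(2*r))).const_add (1/2)).differentiableAt
  have hsoCont : ContinuousOn so (Icc (0:ℝ) 1) :=
    fun x hx => (hso_diffAt x hx).continuousAt.continuousWithinAt
  -- G is continuous on [0,1]
  have hφcont : Continuous φ := hφ.continuous
  have hGcont : ContinuousOn G (Icc (0:ℝ) 1) := by
    rw [hGdef]
    apply ContinuousOn.add
    · apply ContinuousOn.mul
      · exact ((EuclideanSpace.proj (0 : Fin 2)).continuous.comp hφcont).comp_continuousOn hsoCont
      · exact (Real.continuous_cos.comp ((continuous_const.sub continuous_id).mul continuous_const)).continuousOn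
    · apply ContinuousOn.mul
      · exact ((EuclideanSpace.proj (1 : Fin 2)).continuous.comp hφcont).comp_continuousOn hsoCont
      · exact (Real.continuous_sin.comp ((continuous_const.sub continuous_id).mul continuous_const)).continuousOn
  -- G is constant
  have hGne : ∀ x ∈ Icc (0:ℝ) 1, G x ≠ 0 := by
    intro x hx h0
    have := hGsq x hx
    rw [h0] at this
    norm_num at this
  have hGconst : ∀ x ∈ Icc (0:ℝ) 1, G x = G 0 := by
    intro x hx
    by_contra hne
    have h01 : (0:ℝ) ∈ Icc (0:ℝ) 1 := ⟨le_rfl, by norm_num⟩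
    have hg0 : G 0 = 1 ∨ G 0 = -1 := by
      have h := hGsq 0 h01
      have : (G 0 - 1) * (G 0 + 1) = 0 := by linear_combination h
      rcases mul_eq_zero.mp this with h' | h'
      · left; linarith
      · right; linarith
    have hgx : G x = 1 ∨ G x = -1 := by
      have h := hGsq x hx
      have : (G x - 1) * (G x + 1) = 0 := by linear_combination h
      rcases mul_eq_zero.mp this with h' | h'
      · left; linarith
      · right; linarith
    have hsub : Icc (0:ℝ) x ⊆ Icc (0:ℝ) 1 := Icc_subset_Icc le_rfl hx.2
    have hcont' : ContinuousOn G (Icc 0 x) := hGcont.mono hsub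
    have hx0 : (0:ℝ) ≤ x := hx.1
    rcases hg0 with hg0 | hg0 <;> rcases hgx with hgx | hgx
    · exact hne (by rw [hgx, hg0])
    · have h := intermediate_value_Icc' hx0 hcont'
      have h0mem : (0:ℝ) ∈ Icc (G x) (G 0) := by rw [hgx, hg0]; constructor <;> norm_num
      obtain ⟨y, hy, hGy⟩ := h h0mem
      exact hGne y (hsub hy) hGy
    · have h := intermediate_value_Icc hx0 hcont'
      have h0mem : (0:ℝ) ∈ Icc (G 0) (G x) := by rw [hgx, hg0]; constructor <;> norm_num
      obtain ⟨y, hy, hGy⟩ := h h0mem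
      exact hGne y (hsub hy) hGy
    · exact hne (by rw [hgx, hg0])
  set ε : ℝ := G 0 with hεdef
  have hεabs : |ε| = 1 := by
    have h := hGsq 0 ⟨le_rfl, by norm_num⟩
    have : |ε| ^ 2 = 1 := by rw [sq_abs]; exact h
    nlinarith [abs_nonneg ε]
  -- the explicit eigenpath and its derivative
  set ψ : ℝ → EuclideanSpace ℝ (Fin 2) := fun t =>
    (WithLp.equiv 2 (Fin 2 → ℝ)).symm ![Real.cos ((1-t)*α), Real.sin ((1-t)*α)] with hψdef
  set Ψ : ℝ → EuclideanSpace ℝ (Fin 2) := fun t =>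
    (WithLp.equiv 2 (Fin 2 → ℝ)).symm
      ![α * Real.sin ((1-t)*α), -(α * Real.cos ((1-t)*α))] with hΨdef
  have hψD : ∀ t : ℝ, HasDerivAt ψ (Ψ t) t := by
    intro t
    have hin : HasDerivAt (fun t : ℝ => (1-t)*α) (-1*α) t := by
      exact ((hasDerivAt_id t).const_sub 1).mul_const α
    have h0 : HasDerivAt (fun t : ℝ => Real.cos ((1-t)*α)) (α * Real.sin ((1-t)*α)) t := by
      have := hin.cos
      rw [show -Real.sin ((1-t)*α) * (-1*α) = α * Real.sin ((1-t)*α) by ring] at this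
      exact this
    have h1 : HasDerivAt (fun t : ℝ => Real.sin ((1-t)*α)) (-(α * Real.cos ((1-t)*α))) t := by
      have := hin.sin
      rw [show Real.cos ((1-t)*α) * (-1*α) = -(α * Real.cos ((1-t)*α)) by ring] at this
      exact this
    have hF : HasDerivAt (fun t : ℝ => (![Real.cos ((1-t)*α), Real.sin ((1-t)*α)] : Fin 2 → ℝ))
        (![α * Real.sin ((1-t)*α), -(α * Real.cos ((1-t)*α))]) t := by
      rw [hasDerivAt_pi]
      intro i
      fin_cases i
      · simpa using h0
      · simpa using h1
    have := ((PiLp.continuousLinearEquiv 2 ℝ (fun _ : Fin 2 => ℝ)).symm.toContinuousLinearMap.hasFDerivAt).comp_hasDerivAt t hF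
    exact this
  have hΨnorm : ∀ t : ℝ, ‖Ψ t‖ = α := by
    intro t
    rw [hΨdef]
    rw [EuclideanSpace.norm_eq]
    simp only [WithLp.equiv_symm_apply, PiLp.toLp_apply, Fin.sum_univ_two,
      Matrix.cons_val_zero, Matrix.cons_val_one, Matrix.head_cons,
      Real.norm_eq_abs, sq_abs]
    have : (α * Real.sin ((1-t)*α))^2 + (-(α * Real.cos ((1-t)*α)))^2 = α^2 := by
      have := hpyth t
      nlinarith [this]
    rw [this, Real.sqrt_sq (le_of_lt hα_pos)]
  -- φ ∘ so agrees with ε • ψ on [0,1]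
  have hEqOn : Set.EqOn (fun t => φ (so t)) (fun t => ε • ψ t) (Icc (0:ℝ) 1) := by
    intro x hx
    have hc := hcomp x hx
    have hGx := hGconst x hx
    ext i
    fin_cases i
    · show φ (so x) 0 = (ε • ψ x) 0
      rw [PiLp.smul_apply, smul_eq_mul]
      rw [hψdef]
      simp only [WithLp.equiv_symm_apply, PiLp.toLp_apply, Matrix.cons_val_zero]
      rw [hc.1, hGx]
    · show φ (so x) 1 = (ε • ψ x) 1
      rw [PiLp.smul_apply, smul_eq_mul]
      rw [hψdef]
      simp only [WithLp.equiv_symm_apply, PiLp.toLp_apply, Matrix.cons_val_one, Matrix.head_cons,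
        Matrix.cons_val_fin_one]
      rw [hc.2, hGx]
  -- conclusion
  intro τ hτ
  have hud : UniqueDiffWithinAt ℝ (Icc (0:ℝ) 1) τ := (uniqueDiffOn_Icc one_pos) τ hτ
  have hDf : DifferentiableAt ℝ (fun t => φ (so t)) τ :=
    (hφ.differentiable one_ne_zero (so τ)).comp τ (hso_diffAt τ hτ)
  have hDg : DifferentiableAt ℝ (fun t => ε • ψ t) τ :=
    ((hψD τ).differentiableAt).const_smul ε
  have hderiv : deriv (fun t => φ (so t)) τ = ε • Ψ τ := by
    rw [← hDf.derivWithin hud, derivWithin_congr hEqOn (hEqOn hτ), hDg.derivWithin hud]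
    exact ((hψD τ).const_smul ε).deriv
  rw [hderiv, norm_smul, hΨnorm τ]
  simp only [Real.norm_eq_abs]
  rw [hεabs, one_mul]
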